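/- arXiv:1007.4796 — 6 statements merged into one kernel-verified Lean document; each statement's English description precedes it below -/
import Mathlib

section
/- Let V' be the set consisting of 0 together with all nonzero v in V with ρ(v) ≠ 0, where ρ is a reciprocal map from V \ {0} to a field k. Then V' is an F_q-linear subspace of V. -/
/-- A reciprocal map `ρ : V \ {0} → k` (formalized as a function on `V` whose values at `0`
are irrelevant): it satisfies `ρ(αv) = α⁻¹ ρ(v)` for `α ∈ 𝔽_q^×`, and
`ρ(v)ρ(v') = ρ(v+v')(ρ(v)+ρ(v'))` whenever `v`, `v'`, `v+v'` are all nonzero. -/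
def IsReciprocal (𝔽 : Type*) {V k : Type*} [Field 𝔽] [AddCommGroup V] [Module 𝔽 V]
    [Field k] [Algebra 𝔽 k] (ρ : V → k) : Prop :=
  (∀ (v : V), v ≠ 0 → ∀ (α : 𝔽), α ≠ 0 → ρ (α • v) = (algebraMap 𝔽 k α)⁻¹ * ρ v) ∧
  (∀ (v v' : V), v ≠ 0 → v' ≠ 0 → v + v' ≠ 0 →
    ρ v * ρ v' = ρ (v + v') * (ρ v + ρ v'))

/-- The set consisting of `0` together with all nonzero `v ∈ V` with `ρ(v) ≠ 0`, where `ρ` is a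
reciprocal map into a field `k`, is an `𝔽_q`-linear subspace of `V`. -/
theorem support_of_reciprocal_is_subspace (𝔽 V k : Type*) [Field 𝔽] [Fintype 𝔽]
    [AddCommGroup V] [Module 𝔽 V] [FiniteDimensional 𝔽 V] [Field k] [Algebra 𝔽 k]
    (hchar : ringChar k = ringChar 𝔽)
    (ρ : V → k) (hρ : IsReciprocal 𝔽 ρ) :
    ∃ V' : Submodule 𝔽 V, (V' : Set V) = {0} ∪ {v : V | v ≠ 0 ∧ ρ v ≠ 0} := by
  set S : Set V := {0} ∪ {v : V | v ≠ 0 ∧ ρ v ≠ 0} with hS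
  have h0 : (0 : V) ∈ S := Or.inl rfl
  have hadd : ∀ a b : V, a ∈ S → b ∈ S → a + b ∈ S := by
    intro a b ha hb
    rcases ha with ha | ⟨ha, hρa⟩
    · rw [Set.mem_singleton_iff] at ha; subst ha; simpa using hb
    rcases hb with hb | ⟨hb, hρb⟩
    · rw [Set.mem_singleton_iff] at hb; subst hb
      exact Or.inr ⟨by simpa using ha, by simpa using hρa⟩
    by_cases hab : a + b = 0
    · exact Or.inl hab
    · refine Or.inr ⟨hab, fun h => ?_⟩
      have hmul := hρ.2 a b ha hb hab
      rw [h, zero_mul] at hmul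
      exact mul_ne_zero hρa hρb hmul
  have hsmul : ∀ (α : 𝔽) (v : V), v ∈ S → α • v ∈ S := by
    intro α v hv
    rcases hv with hv | ⟨hv, hρv⟩
    · rw [Set.mem_singleton_iff] at hv; subst hv
      exact Or.inl (by simp)
    by_cases hα : α = 0
    · subst hα; exact Or.inl (by simp)
    · refine Or.inr ⟨smul_ne_zero hα hv, ?_⟩
      rw [hρ.1 v hv α hα]
      exact mul_ne_zero (inv_ne_zero (by simpa using hα)) hρv
  refine ⟨?_, ?_⟩
  · exact
      { carrier := S
        zero_mem' := h0
        add_mem' := fun h h' => hadd _ _ h h'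
        smul_mem' := fun α v h => hsmul α v h }
  · rfl
end

section
/- If ρ: V \ {0} → k is a reciprocal map into a field and ρ(v) ≠ 0 for all nonzero v (ρ is invertible), then the map λ: V → k defined by λ(0) = 0 and λ(v) = ρ(v)^{-1} for v ≠ 0 is F_q-linear. -/
/-- If `ρ : V \ {0} → k` is an invertible reciprocal map into a field containing `𝔽_q`,
then `λ : V → k` with `λ(0) = 0` and `λ(v) = ρ(v)⁻¹` for `v ≠ 0` is `𝔽_q`-linear. -/
theorem invertible_reciprocal_gives_linear (𝔽 V k : Type*) [Field 𝔽] [Fintype 𝔽]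
    [AddCommGroup V] [Module 𝔽 V] [FiniteDimensional 𝔽 V] [Field k] [Algebra 𝔽 k]
    (ρ : V → k) (hρ : IsReciprocal 𝔽 ρ) (hinv : ∀ v : V, v ≠ 0 → ρ v ≠ 0) :
    IsLinearMap 𝔽 (fun v : V => open scoped Classical in if v = 0 then 0 else (ρ v)⁻¹) := by
  classical
  obtain ⟨hscale, hadd⟩ := hρ
  have hneg : ∀ v : V, v ≠ 0 → ρ (-v) = -ρ v := by
    intro v hv
    have h := hscale v hv (-1) (by norm_num)
    simpa [map_neg, map_one, inv_neg, inv_one] using h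
  constructor
  · intro v v'
    by_cases hv : v = 0
    · simp [hv]
    by_cases hv' : v' = 0
    · simp [hv']
    by_cases hvv : v + v' = 0
    · have hv'eq : v' = -v := by linear_combination (norm := abel) hvv
      simp [hvv, if_neg hv, if_neg hv', hv'eq, hneg v hv, neg_ne_zero, inv_neg]
    · have h := hadd v v' hv hv' hvv
      simp only [if_neg hv, if_neg hv', if_neg hvv]
      have h1 := hinv v hv
      have h2 := hinv v' hv'
      have h3 := hinv (v + v') hvv
      field_simp
      linear_combination h
  · intro α v
    by_cases hv : v = 0
    · simp [hv]
    by_cases hα : α = 0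
    · simp [hα]
    have hαv : α • v ≠ 0 := smul_ne_zero hα hv
    have h := hscale v hv α hα
    have hαk : algebraMap 𝔽 k α ≠ 0 := by
      simpa using (map_ne_zero (algebraMap 𝔽 k)).mpr hα
    simp only [if_neg hv, if_neg hαv, h, mul_inv, inv_inv, Algebra.smul_def]
end

section
/- Let i: V' ↪ V be the inclusion of a nonzero F_q-subspace and ρ: V' \ {0} → k a reciprocal map. Then the extension by zero i_*ρ: V \ {0} → k, defined by (i_*ρ)(v) = ρ(v) if v ∈ V' and 0 otherwise, is again a reciprocal map. -/
/-- If `V' ⊆ V` is a nonzero `𝔽_q`-subspace and `ρ : V' \ {0} → k` is a reciprocal map, then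
the extension by zero `i_*ρ : V \ {0} → k` (equal to `ρ` on `V'` and `0` outside) is again
a reciprocal map. -/
theorem extension_by_zero_reciprocal (𝔽 V k : Type*) [Field 𝔽] [Fintype 𝔽]
    [AddCommGroup V] [Module 𝔽 V] [FiniteDimensional 𝔽 V] [Field k] [Algebra 𝔽 k]
    (V' : Submodule 𝔽 V) (hV' : V' ≠ ⊥)
    (ρ : V' → k) (hρ : IsReciprocal 𝔽 ρ) :
    IsReciprocal 𝔽 (fun v : V =>
      open scoped Classical in if h : v ∈ V' then ρ ⟨v, h⟩ else 0) := by

  constructor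
  · intro v hv α hα
    by_cases h : v ∈ V'
    · have hαv : α • v ∈ V' := V'.smul_mem α h
      simp only [dif_pos h, dif_pos hαv]
      have hv' : (⟨v, h⟩ : V') ≠ 0 := by
        simpa [Submodule.mk_eq_zero] using hv
      have := hρ.1 ⟨v, h⟩ hv' α hα
      convert this using 2
      rfl
    · have hαv : α • v ∉ V' := by
        intro hmem
        exact h (by simpa [smul_smul, inv_mul_cancel₀ hα] using V'.smul_mem α⁻¹ hmem)
      simp [dif_neg h, dif_neg hαv]
  · intro v v' hv hv' hvv'
    by_cases h1 : v ∈ V' <;> by_cases h2 : v' ∈ V'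
    · have h3 : v + v' ∈ V' := V'.add_mem h1 h2
      simp only [dif_pos h1, dif_pos h2, dif_pos h3]
      have := hρ.2 ⟨v, h1⟩ ⟨v', h2⟩ (by simpa [Submodule.mk_eq_zero] using hv)
        (by simpa [Submodule.mk_eq_zero] using hv')
        (by simpa [Submodule.mk_eq_zero, ← Submodule.coe_eq_zero] using hvv')
      convert this using 2
      rfl
    · have h3 : v + v' ∉ V' := fun hm => h2 (by simpa using V'.sub_mem hm h1)
      simp [dif_pos h1, dif_neg h2, dif_neg h3]
    · have h3 : v + v' ∉ V' := fun hm => h1 (by simpa using V'.sub_mem hm h2)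
      simp [dif_neg h1, dif_pos h2, dif_neg h3]
    · by_cases h3 : v + v' ∈ V' <;> simp [dif_neg h1, dif_neg h2, h3]
end

section
/- In the setting of Dickson invariants: writing k(T) := Π_{v ∈ V}(T − v) = T^{q^r} + Σ_{i=0}^{r-1} k_i T^{q^i} in S_V[T], the polynomial h(T) := Π_{v ∈ V, v≠0}(T − 1/v) over R_V satisfies h(T) = T^{q^r − 1} + Σ_{i=1}^r h_i T^{q^r − q^i}, where h_i = k_i/k_0 for 1 ≤ i ≤ r−1 and h_r = 1/k_0. -/
open MvPolynomial Polynomial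

noncomputable section

/-- The fraction field `K_V` of the symmetric algebra of `V`. -/
abbrev KV (𝔽 : Type*) [Field 𝔽] (r : ℕ) := FractionRing (MvPolynomial (Fin r) 𝔽)

/-- The embedding of `V = Fin r → 𝔽` (with basis the variables `X i`) into `K_V`. -/
def vecEmb (𝔽 : Type*) [Field 𝔽] (r : ℕ) (v : Fin r → 𝔽) : KV 𝔽 r :=
  algebraMap (MvPolynomial (Fin r) 𝔽) (KV 𝔽 r) (∑ i, MvPolynomial.C (v i) * X i)

theorem my_reverse_prod {R : Type*} [CommRing R] [IsDomain R] {ι : Type*} (s : Finset ι)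
    (f : ι → R[X]) : (∏ i ∈ s, f i).reverse = ∏ i ∈ s, (f i).reverse := by
  classical
  induction s using Finset.induction with
  | empty => simp [Polynomial.reverse]
  | insert _ _ h ih => simp [Finset.prod_insert h, reverse_mul_of_domain, ih]

theorem my_reverse_X_sub_C {R : Type*} [CommRing R] [Nontrivial R] (a : R) :
    (Polynomial.X - Polynomial.C a).reverse = 1 - Polynomial.C a * Polynomial.X := by
  rw [Polynomial.reverse, natDegree_X_sub_C, reflect_sub, ← pow_one (Polynomial.X : R[X]),
    reflect_monomial, reflect_C]
  simp

theorem my_reflect_sum {R : Type*} [Semiring R] {ι : Type*} (s : Finset ι) (f : ι → R[X])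
    (N : ℕ) : reflect N (∑ i ∈ s, f i) = ∑ i ∈ s, reflect N (f i) := by
  classical
  induction s using Finset.induction with
  | empty => simp [reflect]
  | insert _ _ h ih => simp [Finset.sum_insert h, reflect_add, ih]

theorem vecEmb_ne_zero (𝔽 : Type*) [Field 𝔽] (r : ℕ) {v : Fin r → 𝔽} (hv : v ≠ 0) :
    vecEmb 𝔽 r v ≠ 0 := by
  obtain ⟨i, hi⟩ := Function.ne_iff.mp hv
  simp only [vecEmb, ne_eq, map_eq_zero_iff _ (IsFractionRing.injective (MvPolynomial (Fin r) 𝔽) (KV 𝔽 r))]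
  intro h
  have key : MvPolynomial.eval (Pi.single i 1) (∑ j, MvPolynomial.C (v j) * X j) = v i := by
    simp [Pi.single_apply]
  rw [h, map_zero] at key
  exact hi key.symm

set_option maxHeartbeats 1000000 in
open scoped Classical in
/-- Dickson invariants: writing `k(T) = ∏_{v ∈ V}(T − v) = T^{q^r} + ∑_{i<r} k_i T^{q^i}`, the
polynomial `h(T) = ∏_{0 ≠ v ∈ V}(T − 1/v)` satisfies
`h(T) = T^{q^r−1} + ∑_{i=1}^r h_i T^{q^r−q^i}` with `h_i = k_i/k_0` for `1 ≤ i ≤ r−1` and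
`h_r = 1/k_0`. -/
theorem reciprocal_dickson (𝔽 : Type*) [Field 𝔽] [Fintype 𝔽] (q r : ℕ)
    (hq : q = Fintype.card 𝔽) (hr : 0 < r) (kc : Fin r → KV 𝔽 r)
    (hk : (∏ v : Fin r → 𝔽, (Polynomial.X - Polynomial.C (vecEmb 𝔽 r v)))
        = Polynomial.X ^ (q ^ r)
          + ∑ i : Fin r, Polynomial.C (kc i) * Polynomial.X ^ (q ^ (i : ℕ))) :
    (∏ v : {v : Fin r → 𝔽 // v ≠ 0}, (Polynomial.X - Polynomial.C (vecEmb 𝔽 r v)⁻¹))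
      = Polynomial.X ^ (q ^ r - 1)
        + ∑ i : Fin r,
            Polynomial.C
              (if h : (i : ℕ) + 1 < r then kc ⟨(i : ℕ) + 1, h⟩ / kc ⟨0, hr⟩
               else (kc ⟨0, hr⟩)⁻¹)
              * Polynomial.X ^ (q ^ r - q ^ ((i : ℕ) + 1)) := by
  obtain ⟨s, rfl⟩ : ∃ s, r = s + 1 := ⟨r - 1, (Nat.succ_pred_eq_of_pos hr).symm⟩
  have hq2 : 2 ≤ q := hq ▸ Fintype.one_lt_card
  have hq1 : ∀ i : ℕ, 1 ≤ q ^ i := fun i => Nat.one_le_pow _ _ (by omega)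
  have hqle : ∀ i : ℕ, i ≤ (s + 1) → q ^ i ≤ q ^ (s + 1) := fun i hi =>
    Nat.pow_le_pow_right (by omega) hi
  have hqq : 2 ≤ q ^ (s + 1) := le_trans hq2 (Nat.le_self_pow (by omega) q)
  set P : (KV 𝔽 (s + 1))[X] :=
    ∏ v : {v : Fin (s + 1) → 𝔽 // v ≠ 0},
      (Polynomial.X - Polynomial.C (vecEmb 𝔽 (s + 1) ↑v)) with hPdef
  have h0 : vecEmb 𝔽 (s + 1) 0 = 0 := by simp [vecEmb]
  have hsplit : (∏ v : Fin (s + 1) → 𝔽, (Polynomial.X - Polynomial.C (vecEmb 𝔽 (s + 1) v)))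
      = Polynomial.X * P := by
    rw [hPdef, ← Finset.prod_subtype (Finset.univ.erase 0)
      (fun v => by simp [Finset.mem_erase])
      (fun v => Polynomial.X - Polynomial.C (vecEmb 𝔽 (s + 1) v)),
      ← Finset.mul_prod_erase Finset.univ _ (Finset.mem_univ 0), h0, map_zero, sub_zero]
  have hXQ : Polynomial.X ^ (q ^ (s + 1))
      + ∑ i : Fin (s + 1), Polynomial.C (kc i) * Polynomial.X ^ (q ^ (i : ℕ))
      = Polynomial.X * (Polynomial.X ^ (q ^ (s + 1) - 1)
        + ∑ i : Fin (s + 1), Polynomial.C (kc i) * Polynomial.X ^ (q ^ (i : ℕ) - 1)) := by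
    rw [mul_add, Finset.mul_sum, ← pow_succ']
    congr 1
    · congr 1
      omega
    · refine Finset.sum_congr rfl fun i _ => ?_
      rw [mul_left_comm, ← pow_succ']
      congr 2
      have := hq1 (i : ℕ)
      omega
  have hPQ : P = Polynomial.X ^ (q ^ (s + 1) - 1)
      + ∑ i : Fin (s + 1), Polynomial.C (kc i) * Polynomial.X ^ (q ^ (i : ℕ) - 1) := by
    refine mul_left_cancel₀ Polynomial.X_ne_zero ?_
    rw [← hsplit, hk, hXQ]
  simp only [Fin.mk_zero]
  have hA : ∀ v : {v : Fin (s + 1) → 𝔽 // v ≠ 0}, vecEmb 𝔽 (s + 1) ↑v ≠ 0 :=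
    fun v => vecEmb_ne_zero _ _ v.2
  have hcard : Fintype.card {v : Fin (s + 1) → 𝔽 // v ≠ 0} = q ^ (s + 1) - 1 := by
    have h1 : Fintype.card {v : Fin (s + 1) → 𝔽 // v ≠ 0}
        = Fintype.card (Fin (s + 1) → 𝔽) - Fintype.card {v : Fin (s + 1) → 𝔽 // v = 0} :=
      Fintype.card_subtype_compl _
    rw [h1, Fintype.card_subtype_eq, Fintype.card_fun, Fintype.card_fin, hq]
  have hdegP : P.natDegree = q ^ (s + 1) - 1 := by
    rw [hPdef, Polynomial.natDegree_prod _ _ (fun v _ => Polynomial.X_sub_C_ne_zero _)]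
    simp [Polynomial.natDegree_X_sub_C, hcard]
  -- evaluate at 0 to identify kc 0
  have hP0 : Polynomial.eval 0 P
      = ∏ v : {v : Fin (s + 1) → 𝔽 // v ≠ 0}, (-(vecEmb 𝔽 (s + 1) ↑v)) := by
    rw [hPdef, Polynomial.eval_prod]
    simp
  have hkc0 : kc 0 = ∏ v : {v : Fin (s + 1) → 𝔽 // v ≠ 0}, (-(vecEmb 𝔽 (s + 1) ↑v)) := by
    rw [← hP0, hPQ]
    simp only [Polynomial.eval_add, Polynomial.eval_pow, Polynomial.eval_X,
      Polynomial.eval_finset_sum, Polynomial.eval_mul, Polynomial.eval_C]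
    rw [zero_pow (by omega : q ^ (s + 1) - 1 ≠ 0), Fin.sum_univ_succ]
    have hz : ∀ i : Fin s, (0 : KV 𝔽 (s + 1)) ^ (q ^ ((i : ℕ) + 1) - 1) = 0 := by
      intro i
      rw [zero_pow]
      have h2 : q ^ 1 ≤ q ^ ((i : ℕ) + 1) := Nat.pow_le_pow_right (by omega) (by omega)
      rw [pow_one] at h2
      omega
    simp only [Fin.val_succ, hz, mul_zero, Finset.sum_const_zero, add_zero, Fin.val_zero,
      pow_zero, mul_one, zero_add]
    norm_num
  have hkc0ne : kc 0 ≠ 0 := by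
    rw [hkc0]
    exact Finset.prod_ne_zero_iff.mpr fun v _ => neg_ne_zero.mpr (hA v)
  -- compute the reverse of P in two ways
  have hrev : P.reverse
      = 1 + ∑ i : Fin (s + 1), Polynomial.C (kc i)
          * Polynomial.X ^ (q ^ (s + 1) - q ^ (i : ℕ)) := by
    rw [Polynomial.reverse, hdegP, hPQ, reflect_add, reflect_monomial, revAt_le le_rfl,
      Nat.sub_self, pow_zero, my_reflect_sum]
    congr 1
    refine Finset.sum_congr rfl fun i _ => ?_
    have h1 := hq1 (i : ℕ)
    have h2 := hqle (i : ℕ) (by omega)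
    rw [reflect_C_mul_X_pow, revAt_le (by omega)]
    have h3 : q ^ (s + 1) - 1 - (q ^ (i : ℕ) - 1) = q ^ (s + 1) - q ^ (i : ℕ) := by omega
    rw [h3]
  have hrev2 : P.reverse = ∏ v : {v : Fin (s + 1) → 𝔽 // v ≠ 0},
      (1 - Polynomial.C (vecEmb 𝔽 (s + 1) ↑v) * Polynomial.X) := by
    rw [hPdef, my_reverse_prod]
    exact Finset.prod_congr rfl fun v _ => my_reverse_X_sub_C _
  -- main identity: C (kc 0) * LHS = 1 + ∑ ...
  have hkey : Polynomial.C (kc 0)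
        * (∏ v : {v : Fin (s + 1) → 𝔽 // v ≠ 0},
            (Polynomial.X - Polynomial.C (vecEmb 𝔽 (s + 1) ↑v)⁻¹))
      = 1 + ∑ i : Fin (s + 1), Polynomial.C (kc i)
          * Polynomial.X ^ (q ^ (s + 1) - q ^ (i : ℕ)) := by
    rw [hkc0, map_prod, ← Finset.prod_mul_distrib, ← hrev, hrev2]
    refine Finset.prod_congr rfl fun v _ => ?_
    have hone : Polynomial.C (vecEmb 𝔽 (s + 1) ↑v)
        * Polynomial.C (vecEmb 𝔽 (s + 1) ↑v)⁻¹ = (1 : (KV 𝔽 (s + 1))[X]) := by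
      rw [← Polynomial.C_mul, mul_inv_cancel₀ (hA v), Polynomial.C_1]
    rw [Polynomial.C_neg]
    linear_combination hone
  refine mul_left_cancel₀ (Polynomial.C_ne_zero.mpr hkc0ne) ?_
  rw [hkey]
  conv_rhs => rw [mul_add, Finset.mul_sum, Fin.sum_univ_castSucc]
  conv_lhs => rw [Fin.sum_univ_succ]
  have hsum : (∑ i : Fin s, Polynomial.C (kc 0)
      * (Polynomial.C (if h : ((i.castSucc : Fin (s + 1)) : ℕ) + 1 < s + 1 then
            kc ⟨((i.castSucc : Fin (s + 1)) : ℕ) + 1, h⟩ / kc 0 else (kc 0)⁻¹)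
        * Polynomial.X ^ (q ^ (s + 1) - q ^ (((i.castSucc : Fin (s + 1)) : ℕ) + 1))))
      = ∑ i : Fin s, Polynomial.C (kc i.succ)
          * Polynomial.X ^ (q ^ (s + 1) - q ^ ((i.succ : Fin (s + 1)) : ℕ)) := by
    refine Finset.sum_congr rfl fun i _ => ?_
    rw [dif_pos (by simpa using Nat.succ_lt_succ i.isLt)]
    rw [← mul_assoc, ← Polynomial.C_mul, mul_comm (kc 0), div_mul_cancel₀ _ hkc0ne]
    rfl
  have hlast : Polynomial.C (kc 0)
      * (Polynomial.C (if h : ((Fin.last s : Fin (s + 1)) : ℕ) + 1 < s + 1 then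
            kc ⟨((Fin.last s : Fin (s + 1)) : ℕ) + 1, h⟩ / kc 0 else (kc 0)⁻¹)
        * Polynomial.X ^ (q ^ (s + 1) - q ^ (((Fin.last s : Fin (s + 1)) : ℕ) + 1)))
      = 1 := by
    rw [dif_neg (by simp), Fin.val_last, Nat.sub_self, pow_zero, mul_one, ← Polynomial.C_mul,
      mul_inv_cancel₀ hkc0ne, Polynomial.C_1]
  rw [hsum, hlast]
  simp only [Fin.val_zero, pow_zero]
  ring

end
end

section
/- Let V be an F_q-vector space of dimension r and V* its dual. For a reciprocal map ρ: V \ {0} → k into a field k, the map g_V(ρ): V* → k defined by g_V(ρ)(ℓ) = Σ_{v ≠ 0, ⟨ℓ,v⟩ = 1} ρ(v) is F_q-linear. -/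
open Finset

namespace GVaux

variable {𝔽 V k : Type*} [Field 𝔽] [Fintype 𝔽] [AddCommGroup V] [Module 𝔽 V]
  [Field k] [Algebra 𝔽 k] [Fintype V] [DecidableEq V] [DecidableEq 𝔽]

/-- The sum of `ρ` over the joint fiber `{v ≠ 0 : ℓ v = a, ℓ' v = b}`. -/
def A (ρ : V → k) (ℓ ℓ' : Module.Dual 𝔽 V) (a b : 𝔽) : k :=
  ∑ v ∈ univ.filter (fun v => v ≠ 0 ∧ ℓ v = a ∧ ℓ' v = b), ρ v

/-- The sum `g_V(ρ)(ℓ)` as a finset sum. -/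
def g (ρ : V → k) (ℓ : Module.Dual 𝔽 V) : k :=
  ∑ v ∈ univ.filter (fun v => v ≠ 0 ∧ ℓ v = 1), ρ v

variable (ρ : V → k)
  (hs : ∀ (v : V), v ≠ 0 → ∀ (α : 𝔽), α ≠ 0 → ρ (α • v) = (algebraMap 𝔽 k α)⁻¹ * ρ v)
  (ℓ ℓ' : Module.Dual 𝔽 V)

include hs in
theorem A_scale (a b t : 𝔽) (ht : t ≠ 0) :
    A ρ ℓ ℓ' (t * a) (t * b) = (algebraMap 𝔽 k t)⁻¹ * A ρ ℓ ℓ' a b := by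
  unfold A
  rw [Finset.mul_sum]
  refine Finset.sum_nbij' (fun v => t⁻¹ • v) (fun v => t • v) ?_ ?_ ?_ ?_ ?_
  · intro v hv
    simp only [mem_filter, mem_univ, true_and] at hv ⊢
    obtain ⟨h0, h1, h2⟩ := hv
    refine ⟨smul_ne_zero (inv_ne_zero ht) h0, ?_, ?_⟩
    · rw [map_smul, h1, smul_eq_mul, inv_mul_cancel_left₀ ht]
    · rw [map_smul, h2, smul_eq_mul, inv_mul_cancel_left₀ ht]
  · intro v hv
    simp only [mem_filter, mem_univ, true_and] at hv ⊢
    obtain ⟨h0, h1, h2⟩ := hv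
    exact ⟨smul_ne_zero ht h0, by rw [map_smul, h1, smul_eq_mul],
      by rw [map_smul, h2, smul_eq_mul]⟩
  · intro v _; show t • t⁻¹ • v = v; rw [smul_smul, mul_inv_cancel₀ ht, one_smul]
  · intro v _; show t⁻¹ • t • v = v; rw [smul_smul, inv_mul_cancel₀ ht, one_smul]
  · intro v hv
    simp only [mem_filter, mem_univ, true_and] at hv
    have h := hs (t⁻¹ • v) (smul_ne_zero (inv_ne_zero ht) hv.1) t ht
    rw [smul_smul, mul_inv_cancel₀ ht, one_smul] at h
    exact h

theorem g_fiber_fst : g ρ ℓ = ∑ b : 𝔽, A ρ ℓ ℓ' 1 b := by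
  rw [g, ← Finset.sum_fiberwise (univ.filter (fun v => v ≠ 0 ∧ ℓ v = 1)) (fun v => ℓ' v) ρ]
  refine Finset.sum_congr rfl fun b _ => ?_
  refine Finset.sum_congr ?_ fun _ _ => rfl
  ext v
  simp only [A, mem_filter, mem_univ, true_and]
  tauto

theorem g_fiber_snd : g ρ ℓ' = ∑ a : 𝔽, A ρ ℓ ℓ' a 1 := by
  rw [g, ← Finset.sum_fiberwise (univ.filter (fun v => v ≠ 0 ∧ ℓ' v = 1)) (fun v => ℓ v) ρ]
  refine Finset.sum_congr rfl fun a _ => ?_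
  refine Finset.sum_congr ?_ fun _ _ => rfl
  ext v
  simp only [mem_filter, mem_univ, true_and]
  tauto

theorem g_fiber_add : g ρ (ℓ + ℓ') = ∑ a : 𝔽, A ρ ℓ ℓ' a (1 - a) := by
  rw [g, ← Finset.sum_fiberwise (univ.filter (fun v => v ≠ 0 ∧ (ℓ + ℓ') v = 1))
    (fun v => ℓ v) ρ]
  refine Finset.sum_congr rfl fun a _ => ?_
  refine Finset.sum_congr ?_ fun _ _ => rfl
  ext v
  simp only [mem_filter, mem_univ, true_and, LinearMap.add_apply]
  constructor
  · rintro ⟨⟨h0, h1⟩, h2⟩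
    refine ⟨h0, h2, ?_⟩
    rw [h2] at h1
    linear_combination h1
  · rintro ⟨h0, h1, h2⟩
    refine ⟨⟨h0, ?_⟩, h1⟩
    rw [h1, h2]; ring

include hs in
theorem g_add : g ρ (ℓ + ℓ') = g ρ ℓ + g ρ ℓ' := by
  rw [g_fiber_add ρ ℓ ℓ', g_fiber_fst ρ ℓ ℓ', g_fiber_snd ρ ℓ ℓ']
  -- Split each sum over `𝔽` into the exceptional values and the rest.
  have split1 : ∑ a : 𝔽, A ρ ℓ ℓ' a (1 - a)
      = (∑ a ∈ univ.filter (fun a : 𝔽 => a ≠ 0 ∧ a ≠ 1), A ρ ℓ ℓ' a (1 - a))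
        + (A ρ ℓ ℓ' 0 1 + A ρ ℓ ℓ' 1 0) := by
    rw [← Finset.sum_filter_add_sum_filter_not univ (fun a : 𝔽 => a ≠ 0 ∧ a ≠ 1)]
    congr 1
    have h01 : univ.filter (fun a : 𝔽 => ¬(a ≠ 0 ∧ a ≠ 1)) = {0, 1} := by
      ext a
      simp only [mem_filter, mem_univ, true_and, mem_insert, mem_singleton]
      tauto
    rw [h01, Finset.sum_pair (zero_ne_one (α := 𝔽))]
    norm_num
  have split2 : ∑ b : 𝔽, A ρ ℓ ℓ' 1 b
      = A ρ ℓ ℓ' 1 0 + ∑ b ∈ univ.filter (fun b : 𝔽 => b ≠ 0), A ρ ℓ ℓ' 1 b := by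
    rw [← Finset.sum_filter_add_sum_filter_not univ (fun b : 𝔽 => b ≠ 0)]
    have h0 : univ.filter (fun b : 𝔽 => ¬ b ≠ 0) = {0} := by
      ext b; simp
    rw [h0, Finset.sum_singleton, add_comm]
  have split3 : ∑ a : 𝔽, A ρ ℓ ℓ' a 1
      = A ρ ℓ ℓ' 0 1 + ∑ a ∈ univ.filter (fun a : 𝔽 => a ≠ 0), A ρ ℓ ℓ' a 1 := by
    rw [← Finset.sum_filter_add_sum_filter_not univ (fun a : 𝔽 => a ≠ 0)]
    have h0 : univ.filter (fun a : 𝔽 => ¬ a ≠ 0) = {0} := by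
      ext a; simp
    rw [h0, Finset.sum_singleton, add_comm]
  -- Reindex the sum for `g(ℓ + ℓ')`.
  have main1 : ∑ a ∈ univ.filter (fun a : 𝔽 => a ≠ 0 ∧ a ≠ 1), A ρ ℓ ℓ' a (1 - a)
      = ∑ c ∈ univ.filter (fun c : 𝔽 => c ≠ 0 ∧ c ≠ -1),
          algebraMap 𝔽 k (1 + c) * A ρ ℓ ℓ' 1 c := by
    refine Finset.sum_nbij' (fun a => a⁻¹ - 1) (fun c => (1 + c)⁻¹) ?_ ?_ ?_ ?_ ?_
    · intro a ha
      simp only [mem_filter, mem_univ, true_and] at ha ⊢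
      obtain ⟨h0, h1⟩ := ha
      constructor
      · rw [sub_ne_zero]
        exact fun h => h1 (by rw [← inv_inv a, h, inv_one])
      · intro h
        apply h0
        have : a⁻¹ = 0 := by linear_combination h
        rwa [inv_eq_zero] at this
    · intro c hc
      simp only [mem_filter, mem_univ, true_and] at hc ⊢
      obtain ⟨h0, h1⟩ := hc
      have h1c : (1 : 𝔽) + c ≠ 0 := fun h => h1 (by linear_combination h)
      constructor
      · exact inv_ne_zero h1c
      · intro h
        apply h0
        have : (1 : 𝔽) + c = 1 := by rw [← inv_inv (1 + c), h, inv_one]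
        linear_combination this
    · intro a ha
      show (1 + (a⁻¹ - 1))⁻¹ = a
      have : (1 : 𝔽) + (a⁻¹ - 1) = a⁻¹ := by ring
      rw [this, inv_inv]
    · intro c hc
      show (1 + c)⁻¹⁻¹ - 1 = c
      rw [inv_inv]; ring
    · intro a ha
      simp only [mem_filter, mem_univ, true_and] at ha
      obtain ⟨h0, _⟩ := ha
      have key := A_scale ρ hs ℓ ℓ' 1 (a⁻¹ - 1) a h0
      have e1 : a * 1 = a := mul_one a
      have e2 : a * (a⁻¹ - 1) = 1 - a := by field_simp
      rw [e1, e2] at key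
      rw [key]
      have : (1 : 𝔽) + (a⁻¹ - 1) = a⁻¹ := by ring
      rw [this, map_inv₀]
  -- Reindex the sum for `g(ℓ')`.
  have main2 : ∑ a ∈ univ.filter (fun a : 𝔽 => a ≠ 0), A ρ ℓ ℓ' a 1
      = ∑ d ∈ univ.filter (fun d : 𝔽 => d ≠ 0), algebraMap 𝔽 k d * A ρ ℓ ℓ' 1 d := by
    refine Finset.sum_nbij' (fun a => a⁻¹) (fun d => d⁻¹) ?_ ?_ ?_ ?_ ?_
    · intro a ha
      simp only [mem_filter, mem_univ, true_and] at ha ⊢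
      exact inv_ne_zero ha
    · intro d hd
      simp only [mem_filter, mem_univ, true_and] at hd ⊢
      exact inv_ne_zero hd
    · intro a _; show a⁻¹⁻¹ = a; rw [inv_inv]
    · intro d _; show d⁻¹⁻¹ = d; rw [inv_inv]
    · intro a ha
      simp only [mem_filter, mem_univ, true_and] at ha
      have key := A_scale ρ hs ℓ ℓ' 1 a⁻¹ a ha
      rw [mul_one, mul_inv_cancel₀ ha] at key
      rw [key, map_inv₀]
  -- Combine the two sums on the right-hand side.
  have comb : (∑ b ∈ univ.filter (fun b : 𝔽 => b ≠ 0), A ρ ℓ ℓ' 1 b)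
      + ∑ d ∈ univ.filter (fun d : 𝔽 => d ≠ 0), algebraMap 𝔽 k d * A ρ ℓ ℓ' 1 d
      = ∑ c ∈ univ.filter (fun c : 𝔽 => c ≠ 0), algebraMap 𝔽 k (1 + c) * A ρ ℓ ℓ' 1 c := by
    rw [← Finset.sum_add_distrib]
    refine Finset.sum_congr rfl fun c _ => ?_
    rw [map_add, map_one, add_mul, one_mul]
  -- Removing the vanishing term at `c = -1`.
  have drop : ∑ c ∈ univ.filter (fun c : 𝔽 => c ≠ 0), algebraMap 𝔽 k (1 + c) * A ρ ℓ ℓ' 1 c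
      = ∑ c ∈ univ.filter (fun c : 𝔽 => c ≠ 0 ∧ c ≠ -1),
          algebraMap 𝔽 k (1 + c) * A ρ ℓ ℓ' 1 c := by
    rw [← Finset.sum_filter_add_sum_filter_not (univ.filter (fun c : 𝔽 => c ≠ 0))
      (fun c => c ≠ -1)]
    have hff : (univ.filter (fun c : 𝔽 => c ≠ 0)).filter (fun c => c ≠ -1)
        = univ.filter (fun c : 𝔽 => c ≠ 0 ∧ c ≠ -1) := by
      rw [Finset.filter_filter]
    have hneg : (univ.filter (fun c : 𝔽 => c ≠ 0)).filter (fun c => ¬ c ≠ -1) = {-1} := by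
      ext c
      simp only [mem_filter, mem_univ, true_and, not_not, mem_singleton]
      constructor
      · tauto
      · intro h; exact ⟨by rw [h]; exact neg_ne_zero.mpr one_ne_zero, h⟩
    rw [hff, hneg, Finset.sum_singleton]
    norm_num
  rw [split1, split2, split3, main1, main2, ← drop, ← comb]
  ring

include hs in
theorem g_smul (α : 𝔽) : g ρ (α • ℓ) = α • g ρ ℓ := by
  rcases eq_or_ne α 0 with rfl | hα
  · rw [zero_smul, zero_smul, g]
    have hempty : univ.filter (fun v : V => v ≠ 0 ∧ (0 : Module.Dual 𝔽 V) v = 1) = ∅ := by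
      ext v
      simp only [mem_filter, mem_univ, true_and, Finset.notMem_empty, iff_false,
        LinearMap.zero_apply]
      rintro ⟨-, h⟩
      exact zero_ne_one h
    rw [hempty, Finset.sum_empty]
  · rw [Algebra.smul_def, g, g, Finset.mul_sum]
    refine Finset.sum_nbij' (fun v => α • v) (fun v => α⁻¹ • v) ?_ ?_ ?_ ?_ ?_
    · intro v hv
      simp only [mem_filter, mem_univ, true_and, LinearMap.smul_apply, smul_eq_mul,
        map_smul] at hv ⊢
      obtain ⟨h0, h1⟩ := hv
      exact ⟨smul_ne_zero hα h0, h1⟩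
    · intro v hv
      simp only [mem_filter, mem_univ, true_and, LinearMap.smul_apply, smul_eq_mul,
        map_smul] at hv ⊢
      obtain ⟨h0, h1⟩ := hv
      refine ⟨smul_ne_zero (inv_ne_zero hα) h0, ?_⟩
      rw [h1, mul_inv_cancel_left₀ hα]
    · intro v _; show α⁻¹ • α • v = v; rw [smul_smul, inv_mul_cancel₀ hα, one_smul]
    · intro v _; show α • α⁻¹ • v = v; rw [smul_smul, mul_inv_cancel₀ hα, one_smul]
    · intro v hv
      simp only [mem_filter, mem_univ, true_and] at hv
      have h := hs v hv.1 α hα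
      rw [h]
      have hα' : algebraMap 𝔽 k α ≠ 0 := fun hh =>
        hα ((algebraMap 𝔽 k).injective (by rw [hh, map_zero]))
      rw [← mul_assoc, mul_inv_cancel₀ hα', one_mul]

end GVaux

/-- For a reciprocal map `ρ : V \ {0} → k`, the map
`g_V(ρ) : V* → k`, `ℓ ↦ ∑_{v ≠ 0, ⟨ℓ,v⟩ = 1} ρ(v)` is `𝔽_q`-linear. -/
theorem gV_linear (𝔽 V k : Type*) [Field 𝔽] [Fintype 𝔽]
    [AddCommGroup V] [Module 𝔽 V] [FiniteDimensional 𝔽 V] [Field k] [Algebra 𝔽 k]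
    (ρ : V → k) (hρ : IsReciprocal 𝔽 ρ) :
    IsLinearMap 𝔽 (fun ℓ : Module.Dual 𝔽 V =>
      ∑ᶠ v ∈ {v : V | v ≠ 0 ∧ ℓ v = 1}, ρ v) := by
  classical
  have : Finite V := Module.finite_of_finite 𝔽
  letI : Fintype V := Fintype.ofFinite V
  have key : ∀ ℓ : Module.Dual 𝔽 V,
      (∑ᶠ v ∈ {v : V | v ≠ 0 ∧ ℓ v = 1}, ρ v) = GVaux.g ρ ℓ := by
    intro ℓ
    have hset : {v : V | v ≠ 0 ∧ ℓ v = 1}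
        = ↑(Finset.univ.filter (fun v : V => v ≠ 0 ∧ ℓ v = 1)) := by
      ext v; simp
    rw [hset, finsum_mem_coe_finset, GVaux.g]
  constructor
  · intro ℓ ℓ'
    simp only [key]
    exact GVaux.g_add ρ hρ.1 ℓ ℓ'
  · intro α ℓ
    simp only [key]
    exact GVaux.g_smul ρ hρ.1 ℓ α
end

section
/- Let λ: V* → k be an F_q-linear map into a field k of characteristic char(F_q), and define f_V(λ)(v) := Π_{ℓ ∈ V*, ⟨ℓ,v⟩=1} λ(ℓ) for nonzero v ∈ V. Then f_V(λ) satisfies f_V(λ)(αv) = α^{-1}·f_V(λ)(v) for all α ∈ F_q^×, i.e., the scaling axiom of a reciprocal map. -/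
/-- For an `𝔽_q`-linear map `λ : V* → k` into a field `k`, the map
`f_V(λ) : V \ {0} → k`, `v ↦ ∏_{ℓ ∈ V*, ⟨ℓ,v⟩ = 1} λ(ℓ)` satisfies the scaling axiom of a
reciprocal map: `f_V(λ)(αv) = α⁻¹ · f_V(λ)(v)` for all `α ∈ 𝔽_q^×` and nonzero `v`. -/
theorem fV_scaling (𝔽 V k : Type*) [Field 𝔽] [Fintype 𝔽]
    [AddCommGroup V] [Module 𝔽 V] [FiniteDimensional 𝔽 V] [Field k] [Algebra 𝔽 k]
    (l : Module.Dual 𝔽 V →ₗ[𝔽] k) (v : V) (hv : v ≠ 0) (α : 𝔽) (hα : α ≠ 0) :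
    (∏ᶠ ℓ ∈ {ℓ : Module.Dual 𝔽 V | ℓ (α • v) = 1}, l ℓ)
      = (algebraMap 𝔽 k α)⁻¹ * ∏ᶠ ℓ ∈ {ℓ : Module.Dual 𝔽 V | ℓ v = 1}, l ℓ := by
  classical
  have hVfin : Finite V := Module.finite_of_finite 𝔽
  have hDfin : Finite (Module.Dual 𝔽 V) := Module.finite_of_finite 𝔽
  cases nonempty_fintype (Module.Dual 𝔽 V)
  set q := Fintype.card 𝔽 with hq
  set a : k := algebraMap 𝔽 k α with ha
  -- the set for `α • v` is the image of the set for `v` under `α⁻¹ • ·`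
  have himg : {ℓ : Module.Dual 𝔽 V | ℓ (α • v) = 1}
      = (fun m : Module.Dual 𝔽 V => α⁻¹ • m) '' {ℓ : Module.Dual 𝔽 V | ℓ v = 1} := by
    ext ℓ
    simp only [Set.mem_setOf_eq, Set.mem_image]
    constructor
    · intro h
      refine ⟨α • ℓ, ?_, ?_⟩
      · simpa [map_smul, smul_eq_mul] using h
      · simp [smul_smul, inv_mul_cancel₀ hα]
    · rintro ⟨m, hm, rfl⟩
      simp [map_smul, smul_eq_mul, mul_comm, mul_assoc, inv_mul_cancel₀ hα, mul_inv_cancel₀ hα, hm]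
  have hinj : Set.InjOn (fun m : Module.Dual 𝔽 V => α⁻¹ • m)
      {ℓ : Module.Dual 𝔽 V | ℓ v = 1} := fun x _ y _ h => by
    have := congrArg (fun z : Module.Dual 𝔽 V => α • z) h
    simpa [smul_smul, mul_inv_cancel₀ hα] using this
  rw [himg, finprod_mem_image hinj]
  have hval : ∀ m : Module.Dual 𝔽 V, l (α⁻¹ • m) = a⁻¹ * l m := by
    intro m
    rw [map_smul, Algebra.smul_def, map_inv₀, ha]
  -- convert to finset products
  have hfin : ∀ s : Set (Module.Dual 𝔽 V), ∀ f : Module.Dual 𝔽 V → k,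
      ∏ᶠ ℓ ∈ s, f ℓ = ∏ ℓ ∈ s.toFinset, f ℓ := by
    intro s f
    rw [← finprod_mem_coe_finset, Set.coe_toFinset]
  simp only [hval]
  rw [hfin _ (fun m => a⁻¹ * l m), hfin _ (fun m => l m), Finset.prod_mul_distrib,
    Finset.prod_const]
  set S : Set (Module.Dual 𝔽 V) := {ℓ : Module.Dual 𝔽 V | ℓ v = 1} with hS
  -- it suffices to show `a⁻¹ ^ S.toFinset.card = a⁻¹`
  suffices h : a⁻¹ ^ S.toFinset.card = a⁻¹ by rw [h]
  -- the cardinality of `S` is a power of `q`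
  have hcard : ∃ d : ℕ, S.toFinset.card = q ^ d := by
    -- pick `ℓ₀` with `ℓ₀ v = 1`
    obtain ⟨φ, hφ⟩ : ∃ φ : Module.Dual 𝔽 V, φ v ≠ 0 := by
      by_contra h
      push_neg at h
      exact hv ((Module.forall_dual_apply_eq_zero_iff 𝔽 v).mp h)
    set ℓ₀ : Module.Dual 𝔽 V := (φ v)⁻¹ • φ with hℓ₀
    have hℓ₀v : ℓ₀ v = 1 := by simp [hℓ₀, smul_eq_mul, inv_mul_cancel₀ hφ]
    set ev : Module.Dual 𝔽 V →ₗ[𝔽] 𝔽 := LinearMap.applyₗ v with hev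
    have hevapp : ∀ m : Module.Dual 𝔽 V, ev m = m v := fun m => rfl
    refine ⟨Module.finrank 𝔽 (LinearMap.ker ev), ?_⟩
    have h1 : S.toFinset.card = Nat.card S := by
      rw [Nat.card_eq_fintype_card, Set.toFinset_card]
    have h2 : Nat.card S = Nat.card (LinearMap.ker ev) := by
      refine Nat.card_congr ⟨fun x => ⟨x.1 - ℓ₀, ?_⟩, fun y => ⟨y.1 + ℓ₀, ?_⟩, ?_, ?_⟩
      · have hx : x.1 v = 1 := x.2
        simp [LinearMap.mem_ker, hevapp, hx, hℓ₀v]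
      · have hy : ev y.1 = 0 := y.2
        have : y.1 v = 0 := by rwa [hevapp] at hy
        simp [hS, this, hℓ₀v]
      · intro x; ext : 1; simp
      · intro y; ext : 1; simp
    have h3 : Fintype.card (LinearMap.ker ev) = q ^ Module.finrank 𝔽 (LinearMap.ker ev) :=
      by convert Module.card_eq_pow_finrank (K := 𝔽) (V := LinearMap.ker ev)
    rw [h1, h2, Nat.card_eq_fintype_card, h3]
  obtain ⟨d, hd⟩ := hcard
  rw [hd]
  -- `a ^ (q ^ d) = a`
  have hpow : ∀ n : ℕ, a ^ q ^ n = a := by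
    intro n
    induction n with
    | zero => simp
    | succ n ih =>
      rw [pow_succ, pow_mul, ih, ha, ← map_pow, FiniteField.pow_card]
  rw [inv_pow, hpow d]
end
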